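/- If A ⊆ ℝ² is a good set, then its complement Aᶜ = ℝ² \ A is also a good set. -/
import Mathlib


open Set Function

abbrev Plane := EuclideanSpace ℝ (Fin 2)

/-- Geometric equality: some surjective isometry of the plane maps `S₁` onto `S₂`. -/
def GeomEq (S₁ S₂ : Set Plane) : Prop :=
  ∃ f : Plane → Plane, Isometry f ∧ Function.Surjective f ∧ f '' S₁ = S₂

/-- `S₁` is equal to or smaller than `S₂`: some surjective isometry maps `S₁` into `S₂`. -/
def GeomLe (S₁ S₂ : Set Plane) : Prop :=
  ∃ f : Plane → Plane, Isometry f ∧ Function.Surjective f ∧ f '' S₁ ⊆ S₂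

/-- A figure is good if `A ≤ B` and `B ≤ A` imply `A ≈ B` for every figure `B`. -/
def IsGood (A : Set Plane) : Prop :=
  ∀ B : Set Plane, GeomLe A B → GeomLe B A → GeomEq A B

/-- A figure is strongly good if every surjective isometry mapping it into itself maps it onto itself. -/
def IsStronglyGood (A : Set Plane) : Prop :=
  ∀ f : Plane → Plane, Isometry f → Function.Surjective f → f '' A ⊆ A → f '' A = A

/-- The inverse of a surjective isometry is a surjective isometry. -/
lemma inv_isometry {f : Plane → Plane} (hf : Isometry f) (hfs : Function.Surjective f) :
    ∃ f' : Plane → Plane, Isometry f' ∧ Function.Surjective f' ∧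
      (∀ x, f (f' x) = x) ∧ (∀ x, f' (f x) = x) := by
  have hfb : Function.Bijective f := ⟨hf.injective, hfs⟩
  let e := Equiv.ofBijective f hfb
  refine ⟨e.symm, ?_, e.symm.surjective, fun x => e.apply_symm_apply x,
    fun x => e.symm_apply_apply x⟩
  intro x y
  have h : edist (f (e.symm x)) (f (e.symm y)) = edist (e.symm x) (e.symm y) := hf _ _
  have hx : f (e.symm x) = x := e.apply_symm_apply x
  have hy : f (e.symm y) = y := e.apply_symm_apply y
  rw [hx, hy] at h
  exact h.symm

/-- Proposition 1.4: if `A` is a good set then its complement is also a good set. -/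
theorem isGood_compl (A : Set Plane) (hA : IsGood A) : IsGood Aᶜ := by
  rintro B ⟨f, hf, hfs, hfi⟩ ⟨g, hg, hgs, hgi⟩
  obtain ⟨f', hf', hf's, hff', hf'f⟩ := inv_isometry hf hfs
  obtain ⟨g', hg', hg's, hgg', hg'g⟩ := inv_isometry hg hgs
  -- Bᶜ ≤ A via f'
  have h1 : GeomLe Bᶜ A := by
    refine ⟨f', hf', hf's, ?_⟩
    rintro _ ⟨x, hx, rfl⟩
    by_contra h
    exact hx (hfi ⟨f' x, h, hff' x⟩)
  -- A ≤ Bᶜ via g'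
  have h2 : GeomLe A Bᶜ := by
    refine ⟨g', hg', hg's, ?_⟩
    rintro _ ⟨x, hx, rfl⟩ hmem
    exact hgi ⟨g' x, hmem, hgg' x⟩ hx
  obtain ⟨k, hk, hks, hki⟩ := hA Bᶜ h2 h1
  refine ⟨k, hk, hks, ?_⟩
  rw [Set.image_compl_eq ⟨hk.injective, hks⟩, hki, compl_compl]
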